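/- In the gadget graph H built from graph G (cliques for vertices, label-1 edges for edges of G), every (s,s)-trail T in G with at least one edge maps to a path P in H between two distinct nodes of the clique [s], such that T has odd length if and only if P contains an odd number of label-1 edges, and P contains the node corresponding to edge f of G if and only if T uses f. -/

import Mathlib

/-- The incidences of a graph `G`: pairs of a vertex and an edge containing it.
These are the nodes of the gadget graph. -/
def Inc {V : Type*} (G : SimpleGraph V) : Type _ :=
  {p : V × Sym2 V // p.2 ∈ G.edgeSet ∧ p.1 ∈ p.2}

/-- The gadget graph: each vertex `x` of `G` is replaced by a clique on the incidences
at `x` (label-0 edges), and each edge of `G` gives an edge between the two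
corresponding incidences (label-1 edges). -/
def gadget {V : Type*} (G : SimpleGraph V) : SimpleGraph (Inc G) where
  Adj a b := a ≠ b ∧ (a.1.1 = b.1.1 ∨ a.1.2 = b.1.2)
  symm := ⟨by
    rintro a b ⟨h1, h2⟩
    exact ⟨h1.symm, by tauto⟩⟩
  loopless := ⟨by rintro a ⟨h1, _⟩; exact h1 rfl⟩

/-- Whether an edge of the gadget graph has label 1, i.e. its two endpoints share
the same underlying edge of `G`. -/
def isLab1 {V : Type*} [DecidableEq V] (G : SimpleGraph V) : Sym2 (Inc G) → Bool :=
  Sym2.lift ⟨fun a b => decide (a.1.2 = b.1.2), by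
    intro a b
    exact decide_eq_decide.mpr ⟨Eq.symm, Eq.symm⟩⟩

abbrev incMk {V : Type*} {G : SimpleGraph V} (p : V × Sym2 V)
    (h : p.2 ∈ G.edgeSet ∧ p.1 ∈ p.2) : Inc G := ⟨p, h⟩

lemma gadget_aux {V : Type*} [DecidableEq V] (G : SimpleGraph V) :
    ∀ {u v : V} (W : G.Walk u v), W.IsTrail → 1 ≤ W.length →
    ∃ a b : Inc G, a.1.1 = u ∧ b.1.1 = v ∧ a.1.2 ∈ W.edges ∧
      ∃ P : (gadget G).Walk a b, P.IsPath ∧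
        P.edges.countP (isLab1 G) = W.length ∧
        ∀ c : Inc G, c ∈ P.support ↔ c.1.2 ∈ W.edges := by
  intro u v W
  induction W with
  | nil => intro _ h; simp at h
  | @cons u x v h W' ih =>
    intro hW _
    rw [SimpleGraph.Walk.isTrail_cons] at hW
    obtain ⟨hW', he⟩ := hW
    have hux : u ≠ x := G.ne_of_adj h
    set e : Sym2 V := s(u, x) with hedef
    have heE : e ∈ G.edgeSet := h
    have hue : u ∈ e := Sym2.mem_mk_left u x
    have hxe : x ∈ e := Sym2.mem_mk_right u x
    refine ⟨(incMk (u, e) ⟨heE, hue⟩), ?_⟩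
    cases W' with
    | nil =>
      refine ⟨(incMk (x, e) ⟨heE, hxe⟩), rfl, rfl, by simp [hedef], ?_⟩
      have hadj : (gadget G).Adj (incMk (u, e) ⟨heE, hue⟩) (incMk (x, e) ⟨heE, hxe⟩) := by
        refine ⟨fun hc => hux ?_, Or.inr rfl⟩
        exact congrArg (fun z => z.1.1) hc
      refine ⟨SimpleGraph.Walk.cons hadj SimpleGraph.Walk.nil, ?_, ?_, ?_⟩
      · constructor
        · constructor; simp
        · simp only [SimpleGraph.Walk.support_cons, SimpleGraph.Walk.support_nil]
          simp only [List.nodup_cons, List.mem_singleton, List.not_mem_nil, not_false_iff,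
            List.nodup_nil, and_true]
          intro hc
          exact hux (congrArg (fun z : Inc G => z.1.1) hc)
      · simp [isLab1]
      · intro c
        simp only [SimpleGraph.Walk.support_cons, SimpleGraph.Walk.support_nil,
          SimpleGraph.Walk.edges_cons, SimpleGraph.Walk.edges_nil, List.mem_cons,
          List.mem_singleton, List.not_mem_nil, or_false]
        constructor
        · rintro (rfl | rfl) <;> rfl
        · intro hce
          obtain ⟨⟨c1, c2⟩, hc⟩ := c
          simp only at hce
          subst hce
          rcases Sym2.mem_iff.mp hc.2 with h1 | h1
          · exact Or.inl (Subtype.ext (Prod.ext h1 rfl))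
          · exact Or.inr (Subtype.ext (Prod.ext h1 rfl))
    | cons h2 W'' =>
      obtain ⟨a', b', ha'1, hb'1, ha'2, P', hP', hcount, hsupp⟩ :=
        ih hW' (by simp)
      have hne1 : e ∉ (SimpleGraph.Walk.cons h2 W'').edges := he
      have hxa' : ((incMk (x, e) ⟨heE, hxe⟩) : Inc G) ≠ a' := by
        intro hc
        apply hne1
        have : e = a'.1.2 := congrArg (fun z : Inc G => z.1.2) hc
        rw [this]; exact ha'2
      have hadj2 : (gadget G).Adj (incMk (x, e) ⟨heE, hxe⟩) a' := ⟨hxa', Or.inl ha'1.symm⟩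
      have hadj1 : (gadget G).Adj (incMk (u, e) ⟨heE, hue⟩) (incMk (x, e) ⟨heE, hxe⟩) := by
        refine ⟨fun hc => hux (congrArg (fun z : Inc G => z.1.1) hc), Or.inr rfl⟩
      have hxsupp : ((incMk (x, e) ⟨heE, hxe⟩) : Inc G) ∉ P'.support := by
        intro hc; exact hne1 ((hsupp _).mp hc)
      have husupp : ((incMk (u, e) ⟨heE, hue⟩) : Inc G) ∉ P'.support := by
        intro hc; exact hne1 ((hsupp _).mp hc)
      refine ⟨b', rfl, hb'1, by simp [hedef], SimpleGraph.Walk.cons hadj1 (SimpleGraph.Walk.cons hadj2 P'), ?_, ?_, ?_⟩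
      · refine SimpleGraph.Walk.IsPath.cons (SimpleGraph.Walk.IsPath.cons hP' hxsupp) ?_
        simp only [SimpleGraph.Walk.support_cons, List.mem_cons]
        rintro (hc | hc)
        · exact hux (congrArg (fun z : Inc G => z.1.1) hc)
        · exact husupp hc
      · simp only [SimpleGraph.Walk.edges_cons, List.countP_cons, hcount,
          SimpleGraph.Walk.length_cons]
        have h1 : isLab1 G s((incMk (u, e) ⟨heE, hue⟩), (incMk (x, e) ⟨heE, hxe⟩)) = true := by
          simp [isLab1]
        have h0 : isLab1 G s(((incMk (x, e) ⟨heE, hxe⟩) : Inc G), a') = false := by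
          simp only [isLab1, Sym2.lift_mk, decide_eq_false_iff_not]
          intro hc
          apply hne1; rw [hc]; exact ha'2
        rw [h1, h0]
        simp
      · intro c
        simp only [SimpleGraph.Walk.support_cons, SimpleGraph.Walk.edges_cons, List.mem_cons,
          hsupp c]
        constructor
        · rintro (rfl | rfl | hc)
          · exact Or.inl rfl
          · exact Or.inl rfl
          · exact Or.inr hc
        · rintro (hce | hc)
          · obtain ⟨⟨c1, c2⟩, hcp⟩ := c
            simp only at hce
            subst hce
            rcases Sym2.mem_iff.mp hcp.2 with h1 | h1
            · exact Or.inl (Subtype.ext (Prod.ext h1 rfl))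
            · exact Or.inr (Or.inl (Subtype.ext (Prod.ext h1 rfl)))
          · exact Or.inr (Or.inr hc)

theorem stmt_7 {V : Type*} [DecidableEq V] (G : SimpleGraph V) (s : V)
    (T : G.Walk s s) (hT : T.IsTrail) (hlen : 1 ≤ T.length) :
    ∃ (a b : Inc G), a.1.1 = s ∧ b.1.1 = s ∧ a ≠ b ∧
      ∃ P : (gadget G).Walk a b, P.IsPath ∧
        (Odd T.length ↔ Odd (P.edges.countP (isLab1 G))) ∧
        ∀ c : Inc G, c ∈ P.support ↔ c.1.2 ∈ T.edges := by
  obtain ⟨a, b, ha, hb, haedge, P, hP, hcount, hsupp⟩ := gadget_aux G T hT hlen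
  refine ⟨a, b, ha, hb, ?_, P, hP, by rw [hcount], hsupp⟩
  intro hab
  subst hab
  have hnil := (SimpleGraph.Walk.isPath_iff_eq_nil (p := P)).mp hP
  subst hnil
  cases T with
  | nil => simp at hlen
  | @cons _ x _ h W' =>
    have hux : s ≠ x := G.ne_of_adj h
    have he1 : (s(s, x) : Sym2 V) ∈ (SimpleGraph.Walk.cons h W').edges := by simp
    have h1 := (hsupp (incMk (s, s(s, x)) ⟨h, Sym2.mem_mk_left s x⟩)).mpr he1
    have h2 := (hsupp (incMk (x, s(s, x)) ⟨h, Sym2.mem_mk_right s x⟩)).mpr he1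
    simp only [SimpleGraph.Walk.support_nil, List.mem_singleton] at h1 h2
    exact hux (congrArg (fun z : Inc G => z.1.1) (h1.trans h2.symm))
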